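/- The ring homomorphism π : ℤ_p[b_0, b_1, …]^∧_p → Maps_cts(ℤ_p, ℤ_p) determined by b_i ↦ α_i and continuity is surjective, where α_i is the i-th Teichmüller digit function; moreover π(b_i) ≡ α_i mod p for all i. -/
import Mathlib

open MvPolynomial

open scoped Classical

section Helpers

variable {p : ℕ} [hp : Fact p.Prime]

private lemma dvd_iff_norm_le' (n : ℕ) (z : ℤ_[p]) :
    (p:ℤ_[p])^n ∣ z ↔ ‖z‖ ≤ (p : ℝ) ^ (-n : ℤ) := by
  rw [PadicInt.norm_le_pow_iff_mem_span_pow, Ideal.mem_span_singleton]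

private lemma root_sep {x y : ℤ_[p]} (hx : x^p = x) (hy : y^p = y)
    (h : (p:ℤ_[p]) ∣ x - y) : x = y := by
  have key : ∀ k : ℕ, (p:ℤ_[p])^(k+1) ∣ x - y := by
    intro k
    induction k with
    | zero => simpa using h
    | succ k ih =>
      have hgeom : (∑ i ∈ Finset.range p, x ^ i * y ^ (p - 1 - i)) * (x - y) = x ^ p - y ^ p :=
        geom_sum₂_mul x y p
      have hdvd : (p:ℤ_[p]) ∣ ∑ i ∈ Finset.range p, x ^ i * y ^ (p - 1 - i) := by
        have hker : ∀ z : ℤ_[p], (p:ℤ_[p]) ∣ z ↔ PadicInt.toZMod z = 0 := by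
          intro z
          rw [← Ideal.mem_span_singleton, ← PadicInt.maximalIdeal_eq_span_p,
            ← PadicInt.ker_toZMod, RingHom.mem_ker]
        rw [hker]
        have hxy : PadicInt.toZMod x = PadicInt.toZMod y := by
          have := (hker (x - y)).mp h
          rw [map_sub, sub_eq_zero] at this; exact this
        rw [map_sum]
        have : ∀ i ∈ Finset.range p, PadicInt.toZMod (x ^ i * y ^ (p - 1 - i))
            = (PadicInt.toZMod x) ^ (p-1) := by
          intro i hi
          rw [map_mul, map_pow, map_pow, hxy, ← pow_add]
          congr 1
          have := Finset.mem_range.mp hi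
          omega
        rw [Finset.sum_congr rfl this, Finset.sum_const, Finset.card_range]
        simp [nsmul_eq_mul, ZMod.natCast_self]
      have h2 : (p:ℤ_[p])^(k+2) ∣ (∑ i ∈ Finset.range p, x ^ i * y ^ (p - 1 - i)) * (x - y) := by
        rw [pow_succ, mul_comm]
        exact mul_dvd_mul hdvd ih
      rwa [hgeom, hx, hy] at h2
  have hnorm : ∀ k : ℕ, ‖x - y‖ ≤ (p:ℝ) ^ (-(k+1) : ℤ) := fun k =>
    (dvd_iff_norm_le' (k+1) _).mp (key k)
  have : ‖x - y‖ ≤ 0 := by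
    have hp1 : (1:ℝ) < p := by exact_mod_cast hp.out.one_lt
    have htend : Filter.Tendsto (fun k : ℕ => (p:ℝ) ^ (-(k+1) : ℤ)) Filter.atTop (nhds 0) := by
      have : Filter.Tendsto (fun k : ℕ => ((p:ℝ)⁻¹) ^ (k+1)) Filter.atTop (nhds 0) := by
        have := tendsto_pow_atTop_nhds_zero_of_lt_one (by positivity)
          (by rw [inv_lt_one_iff₀]; right; exact hp1) (𝕜 := ℝ) (r := (p:ℝ)⁻¹)
        exact this.comp (Filter.tendsto_add_atTop_nat 1)
      convert this using 2 with k
      rw [inv_pow, ← zpow_natCast, ← zpow_neg]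
      push_cast; ring_nf
    exact ge_of_tendsto htend (Filter.Eventually.of_forall hnorm)
  have := le_antisymm this (norm_nonneg _)
  rwa [norm_eq_zero, sub_eq_zero] at this

section Digits

variable (α : ℕ → C(ℤ_[p], ℤ_[p]))
  (hsum : ∀ a : ℤ_[p], HasSum (fun i : ℕ => α i a * (p : ℤ_[p]) ^ i) a)

include hsum

private lemma tail_dvd (x : ℤ_[p]) (m : ℕ) :
    (p:ℤ_[p])^m ∣ x - ∑ j ∈ Finset.range m, α j x * (p:ℤ_[p])^j := by
  have h : HasSum (fun n : ℕ => α (n + m) x * (p:ℤ_[p])^(n+m))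
      (x - ∑ j ∈ Finset.range m, α j x * (p:ℤ_[p])^j) :=
    (hasSum_nat_add_iff' (f := fun i : ℕ => α i x * (p : ℤ_[p]) ^ i) m).mpr (hsum x)
  rw [dvd_iff_norm_le']
  refine le_of_tendsto (h.tendsto_sum_nat.norm) ?_
  refine Filter.Eventually.of_forall fun n => ?_
  rw [← dvd_iff_norm_le']
  exact Finset.dvd_sum fun i _ => Dvd.dvd.mul_left (by rw [pow_add]; exact dvd_mul_left _ _) _

variable (hpow : ∀ (i : ℕ) (a : ℤ_[p]), (α i a) ^ p = α i a)
include hpow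

private lemma digit_eq (n : ℕ) (x y : ℤ_[p]) (h : (p:ℤ_[p])^n ∣ x - y) :
    ∀ i, i < n → α i x = α i y := by
  intro i
  induction i using Nat.strong_induction_on with
  | _ i IH =>
    intro hin
    have h1 := tail_dvd α hsum x (i+1)
    have h2 := tail_dvd α hsum y (i+1)
    have h3 : (p:ℤ_[p])^(i+1) ∣ x - y := dvd_trans (pow_dvd_pow _ (by omega)) h
    have hdvd : (p:ℤ_[p])^(i+1) ∣ (∑ j ∈ Finset.range (i+1), α j x * (p:ℤ_[p])^j)
        - ∑ j ∈ Finset.range (i+1), α j y * (p:ℤ_[p])^j := by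
      have heq : (∑ j ∈ Finset.range (i+1), α j x * (p:ℤ_[p])^j)
          - ∑ j ∈ Finset.range (i+1), α j y * (p:ℤ_[p])^j
          = ((x - y) - (x - ∑ j ∈ Finset.range (i+1), α j x * (p:ℤ_[p])^j))
            + (y - ∑ j ∈ Finset.range (i+1), α j y * (p:ℤ_[p])^j) := by ring
      rw [heq]
      exact dvd_add (dvd_sub h3 h1) h2
    have hsum_eq : (∑ j ∈ Finset.range (i+1), α j x * (p:ℤ_[p])^j)
        - ∑ j ∈ Finset.range (i+1), α j y * (p:ℤ_[p])^j
        = (α i x - α i y) * (p:ℤ_[p])^i := by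
      rw [Finset.sum_range_succ, Finset.sum_range_succ]
      have : ∑ j ∈ Finset.range i, α j x * (p:ℤ_[p])^j
          = ∑ j ∈ Finset.range i, α j y * (p:ℤ_[p])^j :=
        Finset.sum_congr rfl fun j hj => by
          rw [IH j (Finset.mem_range.mp hj) (lt_trans (Finset.mem_range.mp hj) hin)]
      rw [this]; ring
    rw [hsum_eq] at hdvd
    have hd : (p:ℤ_[p]) ∣ α i x - α i y := by
      have hne : ((p:ℤ_[p])^i) ≠ 0 :=
        pow_ne_zero _ (Nat.cast_ne_zero.mpr hp.out.ne_zero)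
      rw [pow_succ] at hdvd
      have : (p:ℤ_[p])^i * (p:ℤ_[p]) ∣ (p:ℤ_[p])^i * (α i x - α i y) := by
        rwa [mul_comm ((p:ℤ_[p])^i) (α i x - α i y)]
      exact (mul_dvd_mul_iff_left hne).mp this
    exact root_sep (hpow i x) (hpow i y) hd

omit hpow

private lemma close_of_digits (m : ℕ) (x y : ℤ_[p]) (h : ∀ j, j < m → α j x = α j y) :
    (p:ℤ_[p])^m ∣ x - y := by
  have h1 := tail_dvd α hsum x m
  have h2 := tail_dvd α hsum y m
  have hS : ∑ j ∈ Finset.range m, α j x * (p:ℤ_[p])^j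
      = ∑ j ∈ Finset.range m, α j y * (p:ℤ_[p])^j :=
    Finset.sum_congr rfl fun j hj => by rw [h j (Finset.mem_range.mp hj)]
  have heq : x - y = (x - ∑ j ∈ Finset.range m, α j x * (p:ℤ_[p])^j)
      - (y - ∑ j ∈ Finset.range m, α j y * (p:ℤ_[p])^j)
      + ((∑ j ∈ Finset.range m, α j x * (p:ℤ_[p])^j)
        - ∑ j ∈ Finset.range m, α j y * (p:ℤ_[p])^j) := by ring
  rw [hS] at h1
  rw [heq, hS, sub_self, add_zero]
  exact dvd_sub h1 h2

end Digits

noncomputable def rootSet (p : ℕ) [Fact p.Prime] : Finset ℤ_[p] :=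
  ((Polynomial.X ^ p - Polynomial.X : Polynomial ℤ_[p]).roots).toFinset

private lemma mem_rootSet {z : ℤ_[p]} (hz : z^p = z) : z ∈ rootSet p := by
  rw [rootSet, Multiset.mem_toFinset, Polynomial.mem_roots']
  refine ⟨?_, by simp [Polynomial.IsRoot, hz]⟩
  intro h0
  have := congrArg (fun q => Polynomial.coeff q p) h0
  simp [Polynomial.coeff_X_pow, Polynomial.coeff_X, hp.out.ne_one,
    (Nat.Prime.one_lt hp.out).ne] at this

private lemma unit_diff {c s : ℤ_[p]} (hc : c^p=c) (hs : s^p=s) (hne : c ≠ s) :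
    IsUnit (c - s) := by
  by_contra h
  exact hne (root_sep hc hs ((PadicInt.norm_lt_one_iff_dvd _).mp
    (PadicInt.not_isUnit_iff.mp h)))

private lemma lagrange_eval {c d : ℤ_[p]} (hc : c^p=c) (hd : d^p=d) :
    Ring.inverse (∏ s ∈ (rootSet p).erase c, (c - s)) * ∏ s ∈ (rootSet p).erase c, (d - s)
    = if d = c then 1 else 0 := by
  split
  · next h =>
    subst h
    apply Ring.inverse_mul_cancel
    refine Finset.prod_induction _ IsUnit (fun a b => IsUnit.mul) isUnit_one ?_
    intro s hs
    obtain ⟨hne, hmem⟩ := Finset.mem_erase.mp hs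
    have hsp : s ^ p = s := by
      have := Multiset.mem_toFinset.mp hmem
      rw [Polynomial.mem_roots'] at this
      have := this.2
      simpa [Polynomial.IsRoot, sub_eq_zero] using this
    exact unit_diff hd hsp (Ne.symm hne)
  · next h =>
    rw [Finset.prod_eq_zero (Finset.mem_erase.mpr ⟨h, mem_rootSet hd⟩) (sub_self d), mul_zero]

private lemma aeval_apply (α : ℕ → C(ℤ_[p],ℤ_[p])) (Q : MvPolynomial ℕ ℤ_[p]) (x : ℤ_[p]) :
    (MvPolynomial.aeval α Q : C(ℤ_[p],ℤ_[p])) x = MvPolynomial.aeval (fun i => α i x) Q := by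
  induction Q using MvPolynomial.induction_on with
  | C a => simp
  | add f g hf hg => simp [hf, hg]
  | mul_X f i hf => simp [hf]

end Helpers

theorem stmt_11 (p : ℕ) [Fact p.Prime]
    (α : ℕ → C(ℤ_[p], ℤ_[p]))
    (hpow : ∀ (i : ℕ) (a : ℤ_[p]), (α i a) ^ p = α i a)
    (hsum : ∀ a : ℤ_[p], HasSum (fun i : ℕ => α i a * (p : ℤ_[p]) ^ i) a) :
    DenseRange
        ⇑(MvPolynomial.aeval α : MvPolynomial ℕ ℤ_[p] →ₐ[ℤ_[p]] C(ℤ_[p], ℤ_[p])) ∧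
      ∀ i : ℕ,
        (MvPolynomial.aeval α : MvPolynomial ℕ ℤ_[p] →ₐ[ℤ_[p]] C(ℤ_[p], ℤ_[p])) (X i) - α i ∈
          Ideal.span {(p : C(ℤ_[p], ℤ_[p]))} := by
  have hp : Fact p.Prime := inferInstance
  constructor
  · rw [Metric.denseRange_iff]
    intro f ε hε
    have hcont : UniformContinuous f := CompactSpace.uniformContinuous_of_continuous f.continuous
    obtain ⟨δ, hδ, hmod⟩ := Metric.uniformContinuous_iff.mp hcont (ε/2) (by positivity)
    obtain ⟨M, hM⟩ : ∃ M : ℕ, (p:ℝ)^(-M:ℤ) < δ := by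
      have hp1 : (1:ℝ) < p := by exact_mod_cast hp.out.one_lt
      obtain ⟨M, hM⟩ := exists_pow_lt_of_lt_one hδ
        (by rw [inv_lt_one_iff₀]; right; exact hp1)
      exact ⟨M, by rw [zpow_neg, zpow_natCast, ← inv_pow]; exact hM⟩
    haveI : NeZero (p ^ M) := ⟨pow_ne_zero _ hp.out.ne_zero⟩
    set rep : ZMod (p^M) → ℤ_[p] := fun k => ((k.val : ℕ) : ℤ_[p]) with hrep
    have hker : ∀ z : ℤ_[p], (p:ℤ_[p])^M ∣ z ↔ PadicInt.toZModPow M z = 0 := fun z => by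
      rw [← Ideal.mem_span_singleton, ← PadicInt.ker_toZModPow, RingHom.mem_ker]
    have hrepval : ∀ k : ZMod (p^M), PadicInt.toZModPow M (rep k) = k := fun k => by
      rw [hrep]; simp [map_natCast, ZMod.natCast_val, ZMod.cast_id]
    have hclose : ∀ x : ℤ_[p], (p:ℤ_[p])^M ∣ x - rep (PadicInt.toZModPow M x) := fun x => by
      rw [hker, map_sub, hrepval, sub_self]
    set u : ℕ → ZMod (p^M) → ℤ_[p] := fun i k =>
      Ring.inverse (∏ s ∈ (rootSet p).erase (α i (rep k)), (α i (rep k) - s)) with hu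
    set g : MvPolynomial ℕ ℤ_[p] := ∑ k : ZMod (p^M), MvPolynomial.C (f (rep k)) *
      ∏ i ∈ Finset.range M, (MvPolynomial.C (u i k) *
        ∏ s ∈ (rootSet p).erase (α i (rep k)), (MvPolynomial.X i - MvPolynomial.C s)) with hg
    refine ⟨g, ?_⟩
    have hhalf : ε/2 < ε := by linarith
    refine lt_of_le_of_lt ((ContinuousMap.dist_le (by positivity)).mpr ?_) hhalf
    intro x
    set k₀ : ZMod (p^M) := PadicInt.toZModPow M x with hk₀
    have heval : (MvPolynomial.aeval α g : C(ℤ_[p],ℤ_[p])) x = f (rep k₀) := by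
      rw [aeval_apply, hg, map_sum]
      have hterm : ∀ k : ZMod (p^M),
          MvPolynomial.aeval (fun i => α i x) (MvPolynomial.C (f (rep k)) *
            ∏ i ∈ Finset.range M, (MvPolynomial.C (u i k) *
              ∏ s ∈ (rootSet p).erase (α i (rep k)),
                (MvPolynomial.X i - MvPolynomial.C s)))
          = if k = k₀ then f (rep k) else 0 := by
        intro k
        rw [map_mul, MvPolynomial.aeval_C, Algebra.algebraMap_self_apply, map_prod]
        have hfac : ∀ i ∈ Finset.range M,
            MvPolynomial.aeval (fun j => α j x) (MvPolynomial.C (u i k) *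
              ∏ s ∈ (rootSet p).erase (α i (rep k)),
                (MvPolynomial.X i - MvPolynomial.C s))
            = if α i x = α i (rep k) then 1 else 0 := by
          intro i _
          rw [map_mul, MvPolynomial.aeval_C, map_prod]
          have : ∀ s ∈ (rootSet p).erase (α i (rep k)),
              MvPolynomial.aeval (fun j => α j x)
                (MvPolynomial.X i - MvPolynomial.C s) = α i x - s := by
            intro s _
            rw [map_sub, MvPolynomial.aeval_X, MvPolynomial.aeval_C, Algebra.algebraMap_self_apply]
          rw [Finset.prod_congr rfl this, hu]
          exact lagrange_eval (hpow i (rep k)) (hpow i x)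
        rw [Finset.prod_congr rfl hfac]
        by_cases hk : k = k₀
        · subst hk
          have hdig : ∀ i, i < M → α i x = α i (rep k₀) :=
            digit_eq α hsum hpow M x (rep k₀) (hclose x)
          rw [Finset.prod_eq_one fun i hi => by
            rw [if_pos (hdig i (Finset.mem_range.mp hi))], mul_one, if_pos rfl]
        · rw [if_neg hk]
          have : ∃ i ∈ Finset.range M, ¬ (α i x = α i (rep k)) := by
            by_contra hc
            push_neg at hc
            have hcd : (p:ℤ_[p])^M ∣ x - rep k :=
              close_of_digits α hsum M x (rep k) fun j hj =>
                hc j (Finset.mem_range.mpr hj)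
            have : PadicInt.toZModPow M x = k := by
              have := (hker _).mp hcd
              rw [map_sub, hrepval, sub_eq_zero] at this
              exact this
            exact hk (by rw [hk₀, this])
          obtain ⟨i, hi, hne⟩ := this
          rw [Finset.prod_eq_zero hi (by simp [hne]), mul_zero]
      rw [Finset.sum_congr rfl fun k _ => hterm k, Finset.sum_ite_eq' Finset.univ k₀
        (fun k => f (rep k))]
      simp
    rw [heval]
    have hdist : dist x (rep k₀) < δ := by
      rw [dist_eq_norm]
      calc ‖x - rep k₀‖ ≤ (p:ℝ)^(-M:ℤ) := (dvd_iff_norm_le' M _).mp (hclose x)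
        _ < δ := hM
    exact le_of_lt (by simpa [dist_comm] using hmod hdist)
  · intro i
    simp only [MvPolynomial.aeval_X, sub_self]
    exact Ideal.zero_mem _
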